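/- Let L₀ be a field extension of ℚ of transcendence degree 2 over ℚ, generated over ℚ by elements t₁, t₂, t₃, t₄ satisfying t₁² − 3·t₂² = 4 and t₃² − 3·t₄² = 14·t₁ + 28. Then L₀ is not ℚ-rational (and hence not ℚ-unirational), even though the defining system of equations has the rational solution (t₁, t₂, t₃, t₄) = (−2, 0, 0, 0). -/

import Mathlib

universe v

/-- `L` is `k`-rational: `k`-isomorphic to a rational function field over `k`. -/
def IsRationalExt (k : Type) (L : Type v) [Field k] [Field L] [Algebra k L] : Prop :=
  ∃ n : ℕ, Nonempty (L ≃ₐ[k] FractionRing (MvPolynomial (Fin n) k))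

/-- `L` is `k`-unirational: `k`-embeds into a rational function field over `k`. -/
def IsUnirationalExt (k : Type) (L : Type v) [Field k] [Field L] [Algebra k L] : Prop :=
  ∃ n : ℕ, Nonempty (L →ₐ[k] FractionRing (MvPolynomial (Fin n) k))

/-! ### Auxiliary 7-adic lemmas -/

private instance fact7 : Fact (Nat.Prime 7) := ⟨by norm_num⟩

private lemma aux_zmod7 : ∀ u v : ZMod 7, u^2 = 3 * v^2 → u = 0 ∧ v = 0 := by decide

private lemma aux_toZMod_eq_zero (x : ℤ_[7]) : PadicInt.toZMod x = 0 ↔ ‖x‖ < 1 := by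
  rw [PadicInt.norm_lt_one_iff_dvd, ← Ideal.mem_span_singleton,
    ← PadicInt.maximalIdeal_eq_span_p, ← PadicInt.ker_toZMod, RingHom.mem_ker]

private lemma aux_K0 (a b : ℤ_[7]) (h : ‖a‖ = 1 ∨ ‖b‖ = 1) : ‖a^2 - 3*b^2‖ = 1 := by
  rcases lt_or_eq_of_le (PadicInt.norm_le_one (a^2-3*b^2)) with hlt | he
  · exfalso
    rw [← aux_toZMod_eq_zero] at hlt
    simp only [map_sub, map_mul, map_pow, map_ofNat, sub_eq_zero] at hlt
    obtain ⟨ha0, hb0⟩ := aux_zmod7 _ _ hlt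
    rcases h with h | h
    · have := (aux_toZMod_eq_zero a).mp ha0; rw [h] at this; norm_num at this
    · have := (aux_toZMod_eq_zero b).mp hb0; rw [h] at this; norm_num at this
  · exact he

private lemma aux_K0' (a b : ℚ_[7]) (ha : ‖a‖ ≤ 1) (hb : ‖b‖ ≤ 1) (h : ‖a‖ = 1 ∨ ‖b‖ = 1) :
    ‖a^2 - 3*b^2‖ = 1 := by
  set A : ℤ_[7] := ⟨a, ha⟩ with hA
  set B : ℤ_[7] := ⟨b, hb⟩ with hB
  have hAB : ((A^2 - 3*B^2 : ℤ_[7]) : ℚ_[7]) = a^2 - 3*b^2 := by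
    push_cast [hA, hB]
    norm_num
    rfl
  have := aux_K0 A B (by simpa [PadicInt.norm_def, hA, hB] using h)
  rw [← hAB, ← PadicInt.norm_def]
  exact this

private lemma aux_K1 (x y : ℚ_[7]) : ‖x^2 - 3*y^2‖ = max ‖x‖ ‖y‖ ^ 2 := by
  rcases le_total ‖y‖ ‖x‖ with hle | hle
  · by_cases hx0 : x = 0
    · have : y = 0 := by
        have := hle; rw [hx0, norm_zero] at this
        exact norm_eq_zero.mp (le_antisymm this (norm_nonneg _))
      simp [hx0, this]
    · have hx : ‖x‖ ≠ 0 := norm_ne_zero_iff.mpr hx0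
      have hba : ‖y/x‖ ≤ 1 := by
        rw [norm_div, div_le_one (lt_of_le_of_ne (norm_nonneg _) (Ne.symm hx))]; exact hle
      have key := aux_K0' 1 (y/x) (by norm_num) hba (Or.inl (by norm_num))
      have hrw : x^2 - 3*y^2 = x^2 * (1^2 - 3*(y/x)^2) := by field_simp
      rw [hrw, norm_mul, key, mul_one, max_eq_left hle, norm_pow]
  · by_cases hy0 : y = 0
    · have : x = 0 := by
        have := hle; rw [hy0, norm_zero] at this
        exact norm_eq_zero.mp (le_antisymm this (norm_nonneg _))
      simp [hy0, this]
    · have hy : ‖y‖ ≠ 0 := norm_ne_zero_iff.mpr hy0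
      have hab : ‖x/y‖ ≤ 1 := by
        rw [norm_div, div_le_one (lt_of_le_of_ne (norm_nonneg _) (Ne.symm hy))]; exact hle
      have key := aux_K0' (x/y) 1 hab (by norm_num) (Or.inr (by norm_num))
      have hrw : x^2 - 3*y^2 = y^2 * ((x/y)^2 - 3*1^2) := by field_simp; try ring
      rw [hrw, norm_mul, key, mul_one, max_eq_right hle, norm_pow]

private lemma aux_zpsq (x : ℝ) (m : ℤ) : (x^m)^2 = x^(2*m) := by
  rw [← zpow_natCast (x^m) 2, ← zpow_mul]; norm_num [mul_comm]

private lemma aux_norm_intc (k : ℤ) (hk : ¬ (7:ℤ) ∣ k) : ‖(k : ℚ_[7])‖ = 1 := by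
  rcases lt_or_eq_of_le (Padic.norm_int_le_one (p := 7) k) with h | h
  · exact absurd ((Padic.norm_intCast_lt_one_iff (p := 7) (k := k)).mp h) hk
  · exact h

/-- No rational point with `p ≠ -2` on the affine variety. -/
private lemma aux_no_sol (p q r s : ℚ) (h1 : p^2 - 3*q^2 = 4)
    (h2 : r^2 - 3*s^2 = 14*p + 28) : p = -2 := by
  by_contra hp
  have h1c : (p:ℚ_[7])^2 - 3*(q:ℚ_[7])^2 = 4 := by exact_mod_cast h1
  have h2c' : (r:ℚ_[7])^2 - 3*(s:ℚ_[7])^2 = 14*(p:ℚ_[7]) + 28 := by exact_mod_cast h2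
  set P : ℚ_[7] := (p : ℚ_[7]) with hPdef
  set Q : ℚ_[7] := (q : ℚ_[7])
  set R : ℚ_[7] := (r : ℚ_[7])
  set S : ℚ_[7] := (s : ℚ_[7])
  have h2c : R^2 - 3*S^2 = 14*(P+2) := by rw [h2c']; ring
  have hP2 : P + 2 ≠ 0 := by
    have : ((p + 2 : ℚ) : ℚ_[7]) ≠ 0 := by
      rw [Rat.cast_ne_zero]; intro h; exact hp (by linarith)
    push_cast at this; exact this
  have norm4 : ‖(4:ℚ_[7])‖ = 1 := by
    have := aux_norm_intc 4 (by norm_num); norm_num at this ⊢; exact this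
  have norm3 : ‖(3:ℚ_[7])‖ = 1 := by
    have := aux_norm_intc 3 (by norm_num); norm_num at this ⊢; exact this
  have norm2 : ‖(2:ℚ_[7])‖ = 1 := by
    have := aux_norm_intc 2 (by norm_num); norm_num at this ⊢; exact this
  have norm14 : ‖(14:ℚ_[7])‖ = 7⁻¹ := by
    have h7 : ‖(7:ℚ_[7])‖ = 7⁻¹ := by
      have := Padic.norm_p (p := 7); norm_num at this ⊢; exact this
    have h14 : (14 : ℚ_[7]) = 2 * 7 := by norm_num
    rw [h14, norm_mul, norm2, one_mul, h7]
  have hPQ : max ‖P‖ ‖Q‖ ^ 2 = 1 := by rw [← aux_K1, h1c, norm4]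
  have hPle : ‖P‖ ≤ 1 := by
    nlinarith [le_max_left ‖P‖ ‖Q‖, norm_nonneg P, norm_nonneg Q, le_max_right ‖P‖ ‖Q‖]
  have hP2le : ‖P + 2‖ ≤ 1 := le_trans (Padic.nonarchimedean P 2)
    (by rw [norm2]; exact max_le hPle le_rfl)
  have hRS : max ‖R‖ ‖S‖ ^ 2 = 7⁻¹ * ‖P + 2‖ := by
    rw [← aux_K1, h2c, norm_mul, norm14]
  have hP2pos : 0 < ‖P + 2‖ := norm_pos_iff.mpr hP2
  have hMnn : 0 ≤ max ‖R‖ ‖S‖ := le_trans (norm_nonneg R) (le_max_left _ _)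
  have hMpos : 0 < max ‖R‖ ‖S‖ := by
    rcases lt_or_eq_of_le hMnn with h | h
    · exact h
    · exfalso; rw [← h, zero_pow (by norm_num)] at hRS
      have := hRS.symm; nlinarith
  obtain ⟨k, hk⟩ : ∃ k : ℤ, max ‖R‖ ‖S‖ = (7:ℝ)^k := by
    rcases max_choice ‖R‖ ‖S‖ with h | h
    · have hR0 : R ≠ 0 := norm_pos_iff.mp (h ▸ hMpos)
      exact ⟨-R.valuation, by rw [h, Padic.norm_eq_zpow_neg_valuation hR0]; norm_num⟩
    · have hS0 : S ≠ 0 := norm_pos_iff.mp (h ▸ hMpos)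
      exact ⟨-S.valuation, by rw [h, Padic.norm_eq_zpow_neg_valuation hS0]; norm_num⟩
  have hP2val : ‖P + 2‖ = (7:ℝ)^(1 + 2*k) := by
    have : ‖P + 2‖ = 7 * (max ‖R‖ ‖S‖)^2 := by
      rw [hRS]; field_simp
    rw [this, hk, aux_zpsq, zpow_add₀ (by norm_num : (7:ℝ) ≠ 0), zpow_one]
  have hodd : 1 + 2*k < 0 := by
    have h1le : (7:ℝ)^(1+2*k) ≤ (7:ℝ)^(0:ℤ) := by
      rw [zpow_zero]; rw [hP2val] at hP2le; exact hP2le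
    have := (zpow_le_zpow_iff_right₀ (by norm_num : (1:ℝ) < 7)).mp h1le
    omega
  have hP2lt : ‖P + 2‖ < 1 := by
    rw [hP2val, ← zpow_zero (7:ℝ)]
    exact (zpow_lt_zpow_iff_right₀ (by norm_num : (1:ℝ) < 7)).mpr hodd
  have hPm2 : ‖P - 2‖ = 1 := by
    have heq : P - 2 = (P + 2) + (-4) := by ring
    have hne : ‖P + 2‖ ≠ ‖(-4 : ℚ_[7])‖ := by
      rw [norm_neg, norm4]; exact ne_of_lt hP2lt
    rw [heq, Padic.add_eq_max_of_ne hne, norm_neg, norm4, max_eq_right (le_of_lt hP2lt)]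
  have hfac : (P - 2) * (P + 2) = 3 * Q^2 := by linear_combination h1c
  have hQnorm : ‖Q‖^2 = ‖P + 2‖ := by
    have := congrArg norm hfac
    rw [norm_mul, norm_mul, hPm2, one_mul, norm3, one_mul, norm_pow] at this
    exact this.symm
  have hQ0 : Q ≠ 0 := by
    intro h0; rw [h0, norm_zero] at hQnorm; nlinarith
  obtain ⟨m, hm⟩ : ∃ m : ℤ, ‖Q‖ = (7:ℝ)^m :=
    ⟨-Q.valuation, by rw [Padic.norm_eq_zpow_neg_valuation hQ0]; norm_num⟩
  have : (7:ℝ)^(2*m) = (7:ℝ)^(1+2*k) := by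
    rw [← hP2val, ← hQnorm, hm, aux_zpsq]
  have := zpow_right_injective₀ (by norm_num : (0:ℝ) < 7) (by norm_num : (7:ℝ) ≠ 1) this
  omega

private lemma aux_rat_sq_ne_three (w : ℚ) : w^2 ≠ 3 := by
  intro h
  have hc : ((w:ℚ_[7]))^2 - 3*(1:ℚ_[7])^2 = 0 := by
    have : ((w:ℚ_[7]))^2 = 3 := by exact_mod_cast h
    rw [this]; ring
  have := aux_K1 (w : ℚ_[7]) 1
  rw [hc, norm_zero] at this
  have h1 : (1:ℝ) ≤ max ‖(w:ℚ_[7])‖ ‖(1:ℚ_[7])‖ := by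
    rw [norm_one] at *; exact le_max_right _ _
  nlinarith

/-! ### Function-field lemmas -/

private lemma aux_exists_eval_ne_zero {n : ℕ} (P : MvPolynomial (Fin n) ℚ) (h : P ≠ 0) :
    ∃ v : Fin n → ℚ, MvPolynomial.eval v P ≠ 0 := by
  by_contra hc
  push_neg at hc
  exact h (MvPolynomial.funext (fun x => by rw [hc x, map_zero]))

private lemma aux_repr {n : ℕ} (z : FractionRing (MvPolynomial (Fin n) ℚ)) :
    ∃ a b : MvPolynomial (Fin n) ℚ, b ≠ 0 ∧
      algebraMap _ _ b * z = algebraMap (MvPolynomial (Fin n) ℚ)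
        (FractionRing (MvPolynomial (Fin n) ℚ)) a := by
  obtain ⟨a, b, hb, he⟩ := IsFractionRing.div_surjective (A := MvPolynomial (Fin n) ℚ) z
  have hb0 : b ≠ 0 := nonZeroDivisors.ne_zero hb
  refine ⟨a, b, hb0, ?_⟩
  rw [← he]
  have : algebraMap (MvPolynomial (Fin n) ℚ) (FractionRing (MvPolynomial (Fin n) ℚ)) b ≠ 0 :=
    IsFractionRing.to_map_ne_zero_of_mem_nonZeroDivisors hb
  field_simp

/-- No function-field point with `f ≠ -2`. -/
private lemma aux_main {n : ℕ} (f g h e : FractionRing (MvPolynomial (Fin n) ℚ))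
    (h1 : f^2 - 3*g^2 = 4) (h2 : h^2 - 3*e^2 = 14*f + 28) : f = -2 := by
  classical
  by_contra hf
  obtain ⟨a₁, b₁, hb₁, e₁⟩ := aux_repr f
  obtain ⟨a₂, b₂, hb₂, e₂⟩ := aux_repr g
  obtain ⟨a₃, b₃, hb₃, e₃⟩ := aux_repr h
  obtain ⟨a₄, b₄, hb₄, e₄⟩ := aux_repr e
  set ι := algebraMap (MvPolynomial (Fin n) ℚ) (FractionRing (MvPolynomial (Fin n) ℚ)) with hι
  have hinj : Function.Injective ι :=
    IsFractionRing.injective (MvPolynomial (Fin n) ℚ) (FractionRing (MvPolynomial (Fin n) ℚ))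
  obtain ⟨d, hd⟩ : ∃ x, x = b₁ * b₂ * b₃ * b₄ := ⟨_, rfl⟩
  obtain ⟨F, hF⟩ : ∃ x, x = a₁ * b₂ * b₃ * b₄ := ⟨_, rfl⟩
  obtain ⟨G, hG⟩ : ∃ x, x = b₁ * a₂ * b₃ * b₄ := ⟨_, rfl⟩
  obtain ⟨H, hH⟩ : ∃ x, x = b₁ * b₂ * a₃ * b₄ := ⟨_, rfl⟩
  obtain ⟨E, hE⟩ : ∃ x, x = b₁ * b₂ * b₃ * a₄ := ⟨_, rfl⟩
  have hd0 : d ≠ 0 := by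
    rw [hd]
    exact mul_ne_zero (mul_ne_zero (mul_ne_zero hb₁ hb₂) hb₃) hb₄
  have hιd : ι d ≠ 0 := fun hc => hd0 (hinj (by rw [hc, map_zero]))
  have hFe : ι F = ι d * f := by
    rw [hF, hd]; simp only [map_mul]; rw [← e₁]; ring
  have hGe : ι G = ι d * g := by
    rw [hG, hd]; simp only [map_mul]; rw [← e₂]; ring
  have hHe : ι H = ι d * h := by
    rw [hH, hd]; simp only [map_mul]; rw [← e₃]; ring
  have hEe : ι E = ι d * e := by
    rw [hE, hd]; simp only [map_mul]; rw [← e₄]; ring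
  have eq1 : F^2 - 3*G^2 = 4*d^2 := by
    apply hinj
    simp only [map_sub, map_mul, map_pow, map_ofNat]
    rw [hFe, hGe]
    linear_combination (ι d)^2 * h1
  have eq2 : H^2 - 3*E^2 = 14*F*d + 28*d^2 := by
    apply hinj
    simp only [map_sub, map_add, map_mul, map_pow, map_ofNat]
    rw [hHe, hEe, hFe]
    linear_combination (ι d)^2 * h2
  have hne : F + 2*d ≠ 0 := by
    intro hc
    have hc2 := congrArg ι hc
    simp only [map_add, map_mul, map_ofNat, map_zero] at hc2
    rw [hFe] at hc2
    have h3 : ι d * (f + 2) = 0 := by linear_combination hc2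
    rcases mul_eq_zero.mp h3 with hx | hx
    · exact hιd hx
    · exact hf (by linear_combination hx)
  obtain ⟨v, hv⟩ := aux_exists_eval_ne_zero (d * (F + 2*d)) (mul_ne_zero hd0 hne)
  rw [map_mul] at hv
  have hvd : MvPolynomial.eval v d ≠ 0 := fun hc => hv (by rw [hc, zero_mul])
  have hv2 : MvPolynomial.eval v (F + 2*d) ≠ 0 := fun hc => hv (by rw [hc, mul_zero])
  have hv2' : MvPolynomial.eval v F + 2 * MvPolynomial.eval v d ≠ 0 := by
    intro hc; apply hv2
    simp only [map_add, map_mul, map_ofNat]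
    exact hc
  set p : ℚ := MvPolynomial.eval v F / MvPolynomial.eval v d with hp
  set q : ℚ := MvPolynomial.eval v G / MvPolynomial.eval v d with hq
  set r : ℚ := MvPolynomial.eval v H / MvPolynomial.eval v d with hr
  set s : ℚ := MvPolynomial.eval v E / MvPolynomial.eval v d with hs
  have ev1 : (MvPolynomial.eval v F)^2 - 3*(MvPolynomial.eval v G)^2
      = 4*(MvPolynomial.eval v d)^2 := by
    have := congrArg (MvPolynomial.eval v) eq1
    simp only [map_sub, map_mul, map_pow, map_ofNat] at this
    exact this
  have ev2 : (MvPolynomial.eval v H)^2 - 3*(MvPolynomial.eval v E)^2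
      = 14*(MvPolynomial.eval v F)*(MvPolynomial.eval v d)
        + 28*(MvPolynomial.eval v d)^2 := by
    have := congrArg (MvPolynomial.eval v) eq2
    simp only [map_sub, map_add, map_mul, map_pow, map_ofNat] at this
    exact this
  have hr1 : p^2 - 3*q^2 = 4 := by
    rw [hp, hq]
    field_simp
    linear_combination ev1
  have hr2 : r^2 - 3*s^2 = 14*p + 28 := by
    rw [hr, hs, hp]
    field_simp
    linear_combination ev2
  have hsol := aux_no_sol p q r s hr1 hr2
  apply hv2'
  rw [hp] at hsol
  have h4 : MvPolynomial.eval v F = -2 * MvPolynomial.eval v d := by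
    field_simp at hsol
    linarith
  rw [h4]; ring

private lemma aux_no_sqrt3 {n : ℕ} (u : FractionRing (MvPolynomial (Fin n) ℚ)) : u^2 ≠ 3 := by
  intro hu
  obtain ⟨a, b, hb, eb⟩ := aux_repr u
  set ι := algebraMap (MvPolynomial (Fin n) ℚ) (FractionRing (MvPolynomial (Fin n) ℚ)) with hι
  have hinj : Function.Injective ι :=
    IsFractionRing.injective (MvPolynomial (Fin n) ℚ) (FractionRing (MvPolynomial (Fin n) ℚ))
  have key : a^2 = 3*b^2 := by
    apply hinj
    simp only [map_mul, map_pow, map_ofNat]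
    rw [← eb]
    linear_combination (ι b)^2 * hu
  obtain ⟨v, hv⟩ := aux_exists_eval_ne_zero b hb
  have hev : (MvPolynomial.eval v a)^2 = 3*(MvPolynomial.eval v b)^2 := by
    have := congrArg (MvPolynomial.eval v) key
    simp only [map_mul, map_pow, map_ofNat] at this
    exact this
  apply aux_rat_sq_ne_three (MvPolynomial.eval v a / MvPolynomial.eval v b)
  field_simp
  linear_combination hev

private lemma aux_rat_imp_uni (k : Type) (L : Type v) [Field k] [Field L] [Algebra k L] :
    IsRationalExt k L → IsUnirationalExt k L := fun ⟨n, ⟨e⟩⟩ => ⟨n, ⟨e.toAlgHom⟩⟩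

/-- **Example 2.1.**  Let `L₀` be a field extension of `ℚ` of transcendence degree `2`
generated by `t₁, t₂, t₃, t₄` with `t₁² - 3 t₂² = 4` and `t₃² - 3 t₄² = 14 t₁ + 28`.  Then `L₀`
is neither `ℚ`-rational nor `ℚ`-unirational, even though the defining system of equations has
the rational solution `(t₁, t₂, t₃, t₄) = (-2, 0, 0, 0)`. -/
theorem stmt14 (L₀ : Type v) [Field L₀] [Algebra ℚ L₀]
    (htrdeg : ∃ tb : Fin 2 → L₀, IsTranscendenceBasis ℚ tb)
    (t₁ t₂ t₃ t₄ : L₀)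
    (hgen : IntermediateField.adjoin ℚ {t₁, t₂, t₃, t₄} = (⊤ : IntermediateField ℚ L₀))
    (h1 : t₁ ^ 2 - 3 * t₂ ^ 2 = 4)
    (h2 : t₃ ^ 2 - 3 * t₄ ^ 2 = 14 * t₁ + 28) :
    (¬ IsRationalExt ℚ L₀ ∧ ¬ IsUnirationalExt ℚ L₀) ∧
    ((-2 : ℚ) ^ 2 - 3 * (0 : ℚ) ^ 2 = 4 ∧
      (0 : ℚ) ^ 2 - 3 * (0 : ℚ) ^ 2 = 14 * (-2 : ℚ) + 28) := by
  haveI : CharZero L₀ := charZero_of_injective_algebraMap (algebraMap ℚ L₀).injective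
  have notuni : ¬ IsUnirationalExt ℚ L₀ := by
    rintro ⟨n, ⟨φ⟩⟩
    have hinjφ : Function.Injective φ := φ.injective
    have m1 : (φ t₁)^2 - 3*(φ t₂)^2 = 4 := by
      have := congrArg φ h1
      simpa [map_sub, map_mul, map_pow, map_ofNat] using this
    have m2 : (φ t₃)^2 - 3*(φ t₄)^2 = 14*(φ t₁) + 28 := by
      have := congrArg φ h2
      simpa [map_sub, map_add, map_mul, map_pow, map_ofNat] using this
    have hft : φ t₁ = -2 := aux_main _ _ _ _ m1 m2
    have ht1 : t₁ = -2 := hinjφ (by rw [hft, map_neg, map_ofNat])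
    have ht2sq : t₂^2 = 0 := by
      rw [ht1] at h1
      have h3 : (3:L₀) * t₂^2 = 0 := by linear_combination -h1
      rcases mul_eq_zero.mp h3 with hx | hx
      · exact absurd hx three_ne_zero
      · exact hx
    have ht2 : t₂ = 0 := pow_eq_zero_iff (two_ne_zero) |>.mp ht2sq
    by_cases ht4 : t₄ = 0
    · have ht3 : t₃ = 0 := by
        have : t₃^2 = 0 := by
          rw [ht1, ht4] at h2
          linear_combination h2
        exact pow_eq_zero_iff (two_ne_zero) |>.mp this
      obtain ⟨tb, htb⟩ := htrdeg
      have hsub : ({t₁, t₂, t₃, t₄} : Set L₀) ⊆ (⊥ : IntermediateField ℚ L₀) := by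
        have hm2 : (-2 : L₀) ∈ (⊥ : IntermediateField ℚ L₀) := by
          have := IntermediateField.algebraMap_mem (⊥ : IntermediateField ℚ L₀) (-2 : ℚ)
          rwa [map_neg, map_ofNat] at this
        have h0 : (0 : L₀) ∈ (⊥ : IntermediateField ℚ L₀) := zero_mem _
        intro x hx
        simp only [Set.mem_insert_iff, Set.mem_singleton_iff] at hx
        rcases hx with rfl | rfl | rfl | rfl
        · rw [ht1]; exact hm2
        · rw [ht2]; exact h0
        · rw [ht3]; exact h0
        · rw [ht4]; exact h0
      have htop : (⊤ : IntermediateField ℚ L₀) ≤ ⊥ :=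
        hgen ▸ (IntermediateField.adjoin_le_iff.mpr hsub)
      have hmem := htop (IntermediateField.mem_top (x := tb 0))
      rw [IntermediateField.mem_bot] at hmem
      obtain ⟨c, hc⟩ := hmem
      exact htb.1.transcendental 0 (hc ▸ isAlgebraic_algebraMap c)
    · have hphit4 : φ t₄ ≠ 0 := fun hc => ht4 (hinjφ (by rw [hc, map_zero]))
      have hz : (φ t₃)^2 - 3*(φ t₄)^2 = 0 := by rw [m2, hft]; ring
      have : (φ t₃ / φ t₄)^2 = 3 := by
        field_simp
        linear_combination hz
      exact aux_no_sqrt3 _ this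
  refine ⟨⟨?_, notuni⟩, by norm_num⟩
  exact fun hr => notuni (aux_rat_imp_uni ℚ L₀ hr)
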